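/- Let a finite group G act by k-algebra automorphisms on a k-algebra R. Then the map P ↦ (P:G) = ⋂_{g∈G} g·P from G-orbits of prime ideals of R to G-prime ideals of R is a bijection. -/

import Mathlib

/-- A two-sided ideal `P` of a ring `R` is prime if `P ≠ R` and `AB ⊆ P` implies
`A ⊆ P` or `B ⊆ P`. -/
def IsPrimeTwoSided {R : Type*} [Ring R] (P : TwoSidedIdeal R) : Prop :=
  P ≠ ⊤ ∧ ∀ A B : TwoSidedIdeal R, (∀ a ∈ A, ∀ b ∈ B, a * b ∈ P) → A ≤ P ∨ B ≤ P

/-- An ideal is `G`-stable if it is preserved by the action of every `g ∈ G`. -/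
def IsGStable (G : Type*) {R : Type*} [Group G] [Ring R] [MulSemiringAction G R]
    (I : TwoSidedIdeal R) : Prop :=
  ∀ g : G, ∀ x ∈ I, g • x ∈ I

/-- A proper `G`-stable ideal `I` is `G`-prime if `AB ⊆ I` for `G`-stable ideals
`A`, `B` implies `A ⊆ I` or `B ⊆ I`. -/
def IsGPrime (G : Type*) {R : Type*} [Group G] [Ring R] [MulSemiringAction G R]
    (I : TwoSidedIdeal R) : Prop :=
  I ≠ ⊤ ∧ IsGStable G I ∧
    ∀ A B : TwoSidedIdeal R, IsGStable G A → IsGStable G B →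
      (∀ a ∈ A, ∀ b ∈ B, a * b ∈ I) → A ≤ I ∨ B ≤ I

namespace GPA

variable {G R : Type*} [Group G] [Ring R] [MulSemiringAction G R]

/-- The `G`-core of a two-sided ideal. -/
def core (G : Type*) {R : Type*} [Group G] [Ring R] [MulSemiringAction G R]
    (J : TwoSidedIdeal R) : TwoSidedIdeal R :=
  TwoSidedIdeal.mk' {x | ∀ g : G, g • x ∈ J}
    (fun g => by rw [smul_zero]; exact J.zero_mem)
    (fun hx hy g => by rw [smul_add]; exact J.add_mem (hx g) (hy g))
    (fun hx g => by rw [smul_neg]; exact J.neg_mem (hx g))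
    (fun {x y} hy g => by rw [smul_mul']; exact J.mul_mem_left _ _ (hy g))
    (fun {x y} hx g => by rw [smul_mul']; exact J.mul_mem_right _ _ (hx g))

lemma mem_core {J : TwoSidedIdeal R} {x : R} : x ∈ core G J ↔ ∀ g : G, g • x ∈ J :=
  TwoSidedIdeal.mem_mk' _ _ _ _ _ _ _

lemma core_stable (J : TwoSidedIdeal R) : IsGStable G (core G J) := by
  intro g x hx
  rw [mem_core] at hx ⊢
  intro h'
  rw [← mul_smul]
  exact hx (h' * g)

lemma core_le {J : TwoSidedIdeal R} : core G J ≤ J := by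
  intro x hx
  simpa using (mem_core.1 hx) (1 : G)

/-- smul of an ideal -/
def sm (g : G) (J : TwoSidedIdeal R) : TwoSidedIdeal R :=
  TwoSidedIdeal.mk' {x | g⁻¹ • x ∈ J}
    (by simp only [Set.mem_setOf_eq, smul_zero]; exact J.zero_mem)
    (fun hx hy => by simp only [Set.mem_setOf_eq, smul_add] at *; exact J.add_mem hx hy)
    (fun hx => by simp only [Set.mem_setOf_eq, smul_neg] at *; exact J.neg_mem hx)
    (fun {x y} hy => by
      simp only [Set.mem_setOf_eq, smul_mul'] at *; exact J.mul_mem_left _ _ hy)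
    (fun {x y} hx => by
      simp only [Set.mem_setOf_eq, smul_mul'] at *; exact J.mul_mem_right _ _ hx)

lemma mem_sm {g : G} {J : TwoSidedIdeal R} {x : R} : x ∈ sm g J ↔ g⁻¹ • x ∈ J :=
  TwoSidedIdeal.mem_mk' _ _ _ _ _ _ _

/-- `x` is a product of elements, one from each ideal in the list. -/
def ProdIn : List (TwoSidedIdeal R) → R → Prop
  | [], x => x = 1
  | A :: T, x => ∃ a ∈ A, ∃ y, ProdIn T y ∧ x = a * y

lemma prodIn_mem {P : TwoSidedIdeal R} :
    ∀ {L : List (TwoSidedIdeal R)} {x : R}, ProdIn L x → (∃ J ∈ L, J ≤ P) → x ∈ P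
  | [], x, _, hJ => by simp at hJ
  | A :: T, x, hx, ⟨J, hJL, hJP⟩ => by
    obtain ⟨a, ha, y, hy, rfl⟩ := hx
    rcases List.mem_cons.1 hJL with rfl | hJT
    · exact P.mul_mem_right _ _ (hJP ha)
    · exact P.mul_mem_left _ _ (prodIn_mem hy ⟨J, hJT, hJP⟩)

lemma prodIn_smul (h : G) :
    ∀ {L : List (TwoSidedIdeal R)} {x : R}, ProdIn L x → ProdIn (L.map (sm h)) (h • x)
  | [], x, hx => by subst hx; simp [ProdIn]
  | A :: T, x, hx => by
    obtain ⟨a, ha, y, hy, rfl⟩ := hx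
    exact ⟨h • a, mem_sm.2 (by simpa using ha), h • y, prodIn_smul h hy, smul_mul' h a y⟩

lemma multiprime {P : TwoSidedIdeal R} (hP : IsPrimeTwoSided P) :
    ∀ L : List (TwoSidedIdeal R), (∀ x, ProdIn L x → x ∈ P) → ∃ J ∈ L, J ≤ P := by
  intro L
  induction L with
  | nil => intro h; exact absurd (P.eq_top (h 1 rfl)) hP.1
  | cons A T ih =>
    intro h
    -- the ideal of elements `b` with `A * b ⊆ P`
    set K : TwoSidedIdeal R := TwoSidedIdeal.mk' {b | ∀ a ∈ A, a * b ∈ P}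
      (fun a _ => by rw [mul_zero]; exact P.zero_mem)
      (fun hx hy a ha => by rw [mul_add]; exact P.add_mem (hx a ha) (hy a ha))
      (fun hx a ha => by rw [mul_neg]; exact P.neg_mem (hx a ha))
      (fun {r b} hb a ha => by rw [← mul_assoc]; exact hb _ (A.mul_mem_right _ _ ha))
      (fun {b r} hb a ha => by rw [← mul_assoc]; exact P.mul_mem_right _ _ (hb a ha))
      with hK
    have hBK : TwoSidedIdeal.span {y | ProdIn T y} ≤ K := by
      intro y hy
      exact TwoSidedIdeal.mem_span_iff.1 hy K
        (fun z hz => (TwoSidedIdeal.mem_mk' _ _ _ _ _ _ _).2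
          (fun a ha => h _ ⟨a, ha, z, hz, rfl⟩))
    rcases hP.2 A (TwoSidedIdeal.span {y | ProdIn T y})
        (fun a ha b hb => (TwoSidedIdeal.mem_mk' _ _ _ _ _ _ _).1 (hBK hb) a ha) with hle | hle
    · exact ⟨A, List.mem_cons_self (a := A) (l := T), hle⟩
    · obtain ⟨J, hJT, hJP⟩ := ih (fun y hy => hle (TwoSidedIdeal.subset_span hy))
      exact ⟨J, List.mem_cons_of_mem _ hJT, hJP⟩

lemma exists_smul_le [Finite G] {P P' : TwoSidedIdeal R} (hP' : IsPrimeTwoSided P')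
    (hc : ∀ x : R, (∀ g : G, g • x ∈ P) → ∀ g : G, g • x ∈ P') :
    ∃ g : G, sm g P ≤ P' := by
  classical
  have : Fintype G := Fintype.ofFinite G
  set L := (Finset.univ : Finset G).toList.map (fun g => sm g P) with hL
  have hhyp : ∀ x, ProdIn L x → x ∈ P' := by
    intro x hx
    have hcore : ∀ h : G, h • x ∈ P := by
      intro h
      refine prodIn_mem (prodIn_smul h hx) ⟨sm h (sm h⁻¹ P), ?_, ?_⟩
      · rw [hL, List.map_map]
        exact List.mem_map.2 ⟨h⁻¹, by simp, rfl⟩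
      · intro z hz
        rw [mem_sm, mem_sm] at hz
        simpa using hz
    simpa using hc x hcore 1
  obtain ⟨J, hJL, hJP⟩ := multiprime hP' L hhyp
  obtain ⟨g, -, rfl⟩ := List.mem_map.1 hJL
  exact ⟨g, hJP⟩


lemma chain_ub {R : Type*} [Ring R] {c : Set (TwoSidedIdeal R)}
    (hc : IsChain (· ≤ ·) c) {y : TwoSidedIdeal R} (hy : y ∈ c) :
    ∃ U : TwoSidedIdeal R, (∀ z ∈ c, z ≤ U) ∧ (∀ x : R, x ∈ U → ∃ J ∈ c, x ∈ J) := by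
  refine ⟨TwoSidedIdeal.mk' {x | ∃ J ∈ c, x ∈ J}
    ⟨y, hy, TwoSidedIdeal.zero_mem y⟩
    (fun {x z} hx hz => by
      obtain ⟨J1, h1, hx⟩ := hx
      obtain ⟨J2, h2, hz⟩ := hz
      rcases hc.total h1 h2 with h | h
      · exact ⟨J2, h2, J2.add_mem (h hx) hz⟩
      · exact ⟨J1, h1, J1.add_mem hx (h hz)⟩)
    (fun {x} hx => by obtain ⟨J, hJ, hx⟩ := hx; exact ⟨J, hJ, J.neg_mem hx⟩)
    (fun {x z} hz => by obtain ⟨J, hJ, hz⟩ := hz; exact ⟨J, hJ, J.mul_mem_left _ _ hz⟩)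
    (fun {x z} hx => by obtain ⟨J, hJ, hx⟩ := hx; exact ⟨J, hJ, J.mul_mem_right _ _ hx⟩),
    ?_, ?_⟩
  · intro z hz w hw
    rw [TwoSidedIdeal.mem_mk']
    exact ⟨z, hz, hw⟩
  · intro x hx
    rwa [TwoSidedIdeal.mem_mk'] at hx

lemma exists_prime_core {G R : Type*} [Group G] [Finite G] [Ring R] [MulSemiringAction G R]
    {I : TwoSidedIdeal R} (hI : IsGPrime G I) :
    ∃ P : TwoSidedIdeal R, IsPrimeTwoSided P ∧ ∀ x : R, x ∈ I ↔ ∀ g : G, g • x ∈ P := by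
  classical
  have : Fintype G := Fintype.ofFinite G
  set S : Set (TwoSidedIdeal R) := {J | I ≤ J ∧ core G J ≤ I} with hS
  have hIS : I ∈ S := ⟨le_rfl, core_le⟩
  have hchain : ∀ c ⊆ S, IsChain (· ≤ ·) c → ∀ y ∈ c, ∃ ub ∈ S, ∀ z ∈ c, z ≤ ub := by
    intro c hcS hc y hy
    obtain ⟨U, hle, hmem⟩ := chain_ub hc hy
    refine ⟨U, ⟨le_trans (hcS hy).1 (hle y hy), ?_⟩, hle⟩
    intro x hx
    rw [mem_core] at hx
    choose f hf1 hf2 using fun g : G => hmem _ (hx g)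
    have hdir : Directed (· ≤ ·) f := by
      intro g1 g2
      rcases hc.total (hf1 g1) (hf1 g2) with h | h
      · exact ⟨g2, h, le_rfl⟩
      · exact ⟨g1, le_rfl, h⟩
    obtain ⟨g0, hg0⟩ := hdir.finset_le Finset.univ
    exact (hcS (hf1 g0)).2 (mem_core.2 fun g => hg0 g (Finset.mem_univ g) (hf2 g))
  obtain ⟨P, hIP, hPS2, hmax⟩ : ∃ P, I ≤ P ∧ P ∈ S ∧ ∀ z ∈ S, P ≤ z → z ≤ P := by
    obtain ⟨P, h1, h2⟩ := zorn_le_nonempty₀ S hchain I hIS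
    exact ⟨P, h1, h2.1, fun z hz hle => h2.2 hz hle⟩
  have hcorePle : core G P ≤ I := hPS2.2
  have hprime : IsPrimeTwoSided P := by
    constructor
    · rintro rfl
      exact hI.1 (I.eq_top (hcorePle (mem_core.2 fun g => trivial)))
    · intro A B hAB
      by_contra hcon
      push_neg at hcon
      obtain ⟨hA, hB⟩ := hcon
      have key : ∀ C : TwoSidedIdeal R, ¬ C ≤ P → ¬ core G (C ⊔ P) ≤ I := by
        intro C hC hcore
        have hne : C ⊔ P ≠ P := fun h => hC (le_trans le_sup_left (le_of_eq h))
        have hmem : C ⊔ P ∈ S := ⟨le_trans hIP le_sup_right, hcore⟩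
        exact hne (le_antisymm (hmax _ hmem le_sup_right) le_sup_right)
      have hprod : ∀ a ∈ core G (A ⊔ P), ∀ b ∈ core G (B ⊔ P), a * b ∈ I := by
        intro a ha b hb
        refine hcorePle (mem_core.2 fun g => ?_)
        rw [smul_mul']
        obtain ⟨a1, ha1, p, hp, hap⟩ := TwoSidedIdeal.mem_sup.1 (mem_core.1 ha g)
        obtain ⟨b1, hb1, q, hq, hbq⟩ := TwoSidedIdeal.mem_sup.1 (mem_core.1 hb g)
        rw [← hap, ← hbq, add_mul, mul_add, mul_add]
        exact P.add_mem (P.add_mem (hAB _ ha1 _ hb1) (P.mul_mem_left _ _ hq))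
          (P.add_mem (P.mul_mem_right _ _ hp) (P.mul_mem_right _ _ hp))
      rcases hI.2.2 _ _ (core_stable (A ⊔ P)) (core_stable (B ⊔ P)) hprod with h | h
      · exact key A hA h
      · exact key B hB h
  have hIcore : I ≤ core G P := fun z hz => mem_core.2 fun g => hIP (hI.2.1 g z hz)
  exact ⟨P, hprime, fun x =>
    ⟨fun hx => mem_core.1 (hIcore hx), fun hx => hcorePle (mem_core.2 hx)⟩⟩

end GPA

open GPA in
/-- Let a finite group `G` act by `k`-algebra automorphisms on a `k`-algebra `R`.
Then `P ↦ (P:G) = ⋂_{g∈G} g·P` gives a bijection from `G`-orbits of prime ideals of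
`R` onto `G`-prime ideals of `R`: the core of a prime is `G`-prime, every `G`-prime
is the core of some prime, and two primes have the same core exactly when they lie in
the same `G`-orbit. -/
theorem finite_group_orbit_prime_bijection
    {k G R : Type*} [Field k] [Group G] [Finite G] [Ring R] [Algebra k R]
    [MulSemiringAction G R] [SMulCommClass G k R] :
    (∀ P Q : TwoSidedIdeal R, IsPrimeTwoSided P →
        (∀ x : R, x ∈ Q ↔ ∀ g : G, g • x ∈ P) → IsGPrime G Q) ∧
    (∀ I : TwoSidedIdeal R, IsGPrime G I →
        ∃ P : TwoSidedIdeal R, IsPrimeTwoSided P ∧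
          ∀ x : R, x ∈ I ↔ ∀ g : G, g • x ∈ P) ∧
    (∀ P P' : TwoSidedIdeal R, IsPrimeTwoSided P → IsPrimeTwoSided P' →
        ((∀ x : R, (∀ g : G, g • x ∈ P) ↔ ∀ g : G, g • x ∈ P')) →
        ∃ g : G, ∀ x : R, x ∈ P' ↔ g • x ∈ P) := by
  refine ⟨?_, ?_, ?_⟩
  · -- Part 1: the core of a prime is G-prime
    intro P Q hP hQ
    refine ⟨?_, ?_, ?_⟩
    · rintro rfl
      refine hP.1 (P.eq_top ?_)
      simpa using (hQ 1).1 trivial (1 : G)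
    · intro g x hx
      rw [hQ] at hx ⊢
      intro h
      rw [← mul_smul]
      exact hx (h * g)
    · intro A B hA hB hAB
      have hABP : ∀ a ∈ A, ∀ b ∈ B, a * b ∈ P := by
        intro a ha b hb
        simpa using (hQ (a * b)).1 (hAB a ha b hb) (1 : G)
      rcases hP.2 A B hABP with h | h
      · exact Or.inl fun a ha => (hQ a).2 fun g => h (hA g a ha)
      · exact Or.inr fun b hb => (hQ b).2 fun g => h (hB g b hb)
  · -- Part 2
    intro I hI
    exact exists_prime_core hI
  · -- Part 3
    intro P P' hP hP' hcore
    obtain ⟨g, hg⟩ := exists_smul_le hP' (fun x hx => (hcore x).1 hx)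
    obtain ⟨g', hg'⟩ := exists_smul_le hP (fun x hx => (hcore x).2 hx)
    set e : G := g' * g with he
    have hstep : ∀ y ∈ P, e • y ∈ P := by
      intro y hy
      have h1 : g • y ∈ P' := hg (mem_sm.2 (by simpa using hy))
      refine hg' (mem_sm.2 ?_)
      rw [he, ← mul_smul]
      simpa [mul_assoc] using h1
    have hpow : ∀ n : ℕ, ∀ y ∈ P, e ^ n • y ∈ P := by
      intro n
      induction n with
      | zero => intro y hy; simpa using hy
      | succ m ih =>
        intro y hy
        rw [pow_succ, mul_smul]
        exact ih _ (hstep y hy)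
    have hinv : ∀ y ∈ P, e⁻¹ • y ∈ P := by
      have hk : e ^ (orderOf e - 1) * e = 1 := by
        rw [← pow_succ, Nat.sub_add_cancel (Nat.one_le_iff_ne_zero.2 (orderOf_pos e).ne'), pow_orderOf_eq_one]
      have heq : e⁻¹ = e ^ (orderOf e - 1) := inv_eq_of_mul_eq_one_left hk
      intro y hy
      rw [heq]
      exact hpow _ y hy
    refine ⟨g⁻¹, fun x => ⟨fun hx => ?_, fun hx => hg (mem_sm.2 (by simpa using hx))⟩⟩
    · -- x ∈ P' → g⁻¹ • x ∈ P
      have h1 : g' • x ∈ P := hg' (mem_sm.2 (by simpa using hx))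
      have h2 : e⁻¹ • (g' • x) ∈ P := hinv _ h1
      rwa [he, ← mul_smul, mul_inv_rev, inv_mul_cancel_right] at h2
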